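/- arXiv:1410.0474 — 3 statements merged into one kernel-verified Lean document; each statement's English description precedes it below -/
import Mathlib

section
/- Suppose a complex number X_η satisfies X_η = T_L·X_{η−1} + T_R·X_{η+1}, where X_{η−1} = G⁻¹·A_L + G·B_L, X_{η+1} = H·A_R + H⁻¹·B_R, X_η = A_L + B_L = A_R + B_R, T_L = M_f/(1 + M_f + M_r), T_R = M_r/(1 + M_f + M_r), M_f = 1/(G + G⁻¹ − 2), M_r = 1/(H + H⁻¹ − 2), with G, H nonzero, G ≠ 1, H ≠ 1, H·G ≠ 1, and 1 + M_f + M_r ≠ 0. Then A_R·(1 − H·G) = A_L·(1+G)(1−H) + B_R·(H − G), i.e., A_R = T_AA·A_L + T_BA·B_R with T_AA = (1+G)(1−H)/(1−HG) and T_BA = (H−G)/(1−HG). -/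
set_option maxHeartbeats 1000000 in
theorem hard_boundary_AR (G H AL BL AR BR Xη Mf Mr TL TR : ℂ)
    (hG0 : G ≠ 0) (hH0 : H ≠ 0) (hG1 : G ≠ 1) (hH1 : H ≠ 1)
    (hHG : H * G ≠ 1)
    (hMf : Mf = 1 / (G + G⁻¹ - 2)) (hMr : Mr = 1 / (H + H⁻¹ - 2))
    (hden : 1 + Mf + Mr ≠ 0)
    (hTL : TL = Mf / (1 + Mf + Mr)) (hTR : TR = Mr / (1 + Mf + Mr))
    (hX : Xη = TL * (G⁻¹ * AL + G * BL) + TR * (H * AR + H⁻¹ * BR))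
    (hL : Xη = AL + BL) (hR : Xη = AR + BR) :
    AR * (1 - H * G) = AL * (1 + G) * (1 - H) + BR * (H - G) := by
  have hg1 : G - 1 ≠ 0 := sub_ne_zero.mpr hG1
  have hh1 : H - 1 ≠ 0 := sub_ne_zero.mpr hH1
  have hdf : G + G⁻¹ - 2 ≠ 0 := by
    have h : G + G⁻¹ - 2 = (G - 1)^2 / G := by field_simp; ring
    rw [h]; exact div_ne_zero (pow_ne_zero _ hg1) hG0
  have hdr : H + H⁻¹ - 2 ≠ 0 := by
    have h : H + H⁻¹ - 2 = (H - 1)^2 / H := by field_simp; ring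
    rw [h]; exact div_ne_zero (pow_ne_zero _ hh1) hH0
  have hBL : BL = AR + BR - AL := by linear_combination hR - hL
  subst hTL hTR hMf hMr hBL
  rw [hR] at hX
  field_simp [hdf, hdr] at hX hden
  have ha : G * G + 1 - G * 2 ≠ 0 := by
    have := pow_ne_zero 2 hg1
    intro h; apply this; linear_combination h
  have hb : H * H + 1 - H * 2 ≠ 0 := by
    have := pow_ne_zero 2 hh1
    intro h; apply this; linear_combination h
  have ha' : G ^ 2 + 1 - G * 2 ≠ 0 := by rw [sq]; exact ha
  have hb' : H ^ 2 + 1 - 2 * H ≠ 0 := by intro h; apply hb; linear_combination h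
  have hE : (G * G + 1 - G * 2 + G) * (H * H + 1 - H * 2) + H * (G * G + 1 - G * 2) ≠ 0 := by
    intro h; apply hden; field_simp [ha', hb']; linear_combination h
  have hE' : (H ^ 2 + 1 - 2 * H) * (G ^ 2 + 1 - G * 2 + G) + (G ^ 2 + 1 - G * 2) * H ≠ 0 := by
    intro h; apply hE; linear_combination h
  field_simp [ha', hb', hE'] at hX
  have hbig : (G - 1) * (H - 1) * ((G * G + 1 - G * 2) * (H * H + 1 - H * 2) * G * H *
      ((G * G + 1 - G * 2 + G) * (H * H + 1 - H * 2) + H * (G * G + 1 - G * 2))) ≠ 0 :=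
    mul_ne_zero (mul_ne_zero hg1 hh1)
      (mul_ne_zero (mul_ne_zero (mul_ne_zero (mul_ne_zero ha hb) hG0) hH0) hE)
  have key : (AR * (1 - H * G) - (AL * (1 + G) * (1 - H) + BR * (H - G))) *
      ((G - 1) * (H - 1) * ((G * G + 1 - G * 2) * (H * H + 1 - H * 2) * G * H *
      ((G * G + 1 - G * 2 + G) * (H * H + 1 - H * 2) + H * (G * G + 1 - G * 2)))) = 0 := by
    linear_combination ((G * G + 1 - G * 2) * (H * H + 1 - H * 2) * G * H *
      ((G * G + 1 - G * 2 + G) * (H * H + 1 - H * 2) + H * (G * G + 1 - G * 2))) * hX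
  rcases mul_eq_zero.mp key with h | h
  · linear_combination h
  · exact absurd h hbig
end

section
/- Under the hypotheses of the hard-boundary setup (same as Theorem 2's algebraic core), one also has B_L·(1 − H·G) = B_R·(1+H)(1−G) + A_L·(G − H), i.e., B_L = T_BB·B_R + T_AB·A_L with T_BB = (1+H)(1−G)/(1−HG) and T_AB = (G−H)/(1−HG). -/
theorem hard_boundary_BL (G H AL BL AR BR Xη Mf Mr TL TR : ℂ)
    (hG0 : G ≠ 0) (hH0 : H ≠ 0) (hG1 : G ≠ 1) (hH1 : H ≠ 1)
    (hHG : H * G ≠ 1)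
    (hMf : Mf = 1 / (G + G⁻¹ - 2)) (hMr : Mr = 1 / (H + H⁻¹ - 2))
    (hden : 1 + Mf + Mr ≠ 0)
    (hTL : TL = Mf / (1 + Mf + Mr)) (hTR : TR = Mr / (1 + Mf + Mr))
    (hX : Xη = TL * (G⁻¹ * AL + G * BL) + TR * (H * AR + H⁻¹ * BR))
    (hL : Xη = AL + BL) (hR : Xη = AR + BR) :
    BL * (1 - H * G) = BR * (1 + H) * (1 - G) + AL * (G - H) := by
  have hg1 : G - 1 ≠ 0 := sub_ne_zero.mpr hG1
  have hh1 : H - 1 ≠ 0 := sub_ne_zero.mpr hH1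
  have hdG : G + G⁻¹ - 2 ≠ 0 := by
    intro h
    have h2 : (G - 1)^2 = 0 := by field_simp at h; linear_combination h
    exact hg1 (pow_eq_zero_iff (n := 2) (by norm_num) |>.mp h2)
  have hdH : H + H⁻¹ - 2 ≠ 0 := by
    intro h
    have h2 : (H - 1)^2 = 0 := by field_simp at h; linear_combination h
    exact hh1 (pow_eq_zero_iff (n := 2) (by norm_num) |>.mp h2)
  have hAR : AR = AL + BL - BR := by linear_combination hL - hR
  subst hMf hMr hTL hTR hX hAR
  have hdG2 : G * G + 1 - G * 2 ≠ 0 := by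
    intro h; exact pow_ne_zero 2 hg1 (by linear_combination h)
  have hdH2 : H * H + 1 - H * 2 ≠ 0 := by
    intro h; exact pow_ne_zero 2 hh1 (by linear_combination h)
  have e1 : G ^ 2 + 1 - G * 2 ≠ 0 := by intro h; exact hdG2 (by linear_combination h)
  have e2 : H ^ 2 + 1 - 2 * H ≠ 0 := by intro h; exact hdH2 (by linear_combination h)
  field_simp at hden
  field_simp [hden] at hL
  have hN : (G * G + 1 - G * 2 + G) * (H * H + 1 - H * 2) + H * (G * G + 1 - G * 2) ≠ 0 := by
    intro h; apply hden; rw [div_eq_zero_iff]; left; linear_combination h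
  rw [div_eq_iff (by intro h; exact hN (by linear_combination h))] at hL
  have hK : ((G-1)*(H-1)*(G*G+1-G*2)*(H*H+1-H*2)*G*H*((G*G+1-G*2+G)*(H*H+1-H*2)+H*(G*G+1-G*2))) ≠ 0 :=
    mul_ne_zero (mul_ne_zero (mul_ne_zero (mul_ne_zero (mul_ne_zero (mul_ne_zero hg1 hh1) hdG2) hdH2) hG0) hH0) hN
  refine mul_left_cancel₀ hK ?_
  linear_combination (-(G*G+1-G*2)*(H*H+1-H*2)*G*H*((G*G+1-G*2+G)*(H*H+1-H*2)+H*(G*G+1-G*2))) * hL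
end

section
/- Let G, H, A, B, W be complex numbers with H·G ≠ 1 and let T_ab = (HG − G²)/(1−HG), T_r = M_r/(1 + (1−G)·M_f + (1−G)·M_r) with M_f = M_r = 1/(G + G⁻¹ − 2) on the left side (G ≠ 0, G+G⁻¹ ≠ 2). If the controller gain is F = −T_ab/(T_r·(1 + T_ab)) and W = F·A, then T_ab·A + T_r·(1 + T_ab)·W = 0, and moreover F simplifies to G − H (assuming 1 + T_ab ≠ 0 and T_r ≠ 0). -/
theorem soft_boundary_controller (G H A W F Tab Tr Mf Mr : ℂ)
    (hHG : H * G ≠ 1) (hG0 : G ≠ 0) (hGα : G + G⁻¹ ≠ 2)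
    (hTab : Tab = (H * G - G ^ 2) / (1 - H * G))
    (hMf : Mf = 1 / (G + G⁻¹ - 2)) (hMr : Mr = 1 / (G + G⁻¹ - 2))
    (hTr : Tr = Mr / (1 + (1 - G) * Mf + (1 - G) * Mr))
    (h1Tab : 1 + Tab ≠ 0) (hTr0 : Tr ≠ 0)
    (hF : F = -Tab / (Tr * (1 + Tab)))
    (hW : W = F * A) :
    Tab * A + Tr * (1 + Tab) * W = 0 ∧ F = G - H := by
  have h1 : (1 : ℂ) - H * G ≠ 0 := by
    intro h; apply hHG; linear_combination -h
  have hα : G + G⁻¹ - 2 ≠ 0 := sub_ne_zero.mpr hGα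
  have h2 : (1 : ℂ) - G ^ 2 ≠ 0 := by
    intro h
    apply h1Tab
    rw [hTab]
    field_simp
    first
    | linear_combination -h
    | linear_combination 2 * h
    | linear_combination h
  have hG1 : (1 : ℂ) - G ≠ 0 := fun h => h2 (by linear_combination (1 + G) * h)
  have hq : (1 : ℂ) - G * 2 + G ^ 2 ≠ 0 := by
    intro h
    apply hG1
    have h' : (1 - G) ^ 2 = 0 := by linear_combination h
    exact pow_eq_zero_iff two_ne_zero |>.mp h'
  have hd : 1 + (1 - G) * Mf + (1 - G) * Mr ≠ 0 := by
    intro h; apply hTr0; rw [hTr, h, div_zero]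
  have hTrv : Tr = G / (1 - G ^ 2) := by
    rw [hTr, hMr, hMf] at *
    rw [div_eq_div_iff hd h2]
    have hc : (1 - G * 2 + G ^ 2) * (1 - G * 2 + G ^ 2)⁻¹ = 1 := mul_inv_cancel₀ hq
    field_simp [hq]
    linear_combination hc
  have hFv : F = G - H := by
    rw [hF, hTab, hTrv]
    rw [div_eq_iff (mul_ne_zero (hTrv ▸ hTr0) (hTab ▸ h1Tab))]
    field_simp
    ring
  constructor
  · rw [hW, hF]
    field_simp
    ring
  · exact hFv
end
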